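/- arXiv:1807.05822 — 4 statements merged into one kernel-verified Lean document; each statement's English description precedes it below -/
import Mathlib

section
/- Let (G,P) be a quasi-lattice ordered group. The family of indicator functions (χ_{pP})_{p∈P}, where χ_{pP} : P → ℝ takes the value 1 on pP and 0 elsewhere, is linearly independent; equivalently, if F ⊆ P is finite and ∑_{p∈F} c_p χ_{pP}(x) = 0 for all x ∈ P, then c_p = 0 for every p ∈ F. -/
/-- The order on `G` induced by the submonoid `P`: `g ≤ h` iff `g⁻¹ * h ∈ P`. -/
def QLe {G : Type*} [Group G] (P : Submonoid G) (g h : G) : Prop := g⁻¹ * h ∈ P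

/-- `u` is the least upper bound of `g` and `h` with respect to `QLe P`. -/
def QLub {G : Type*} [Group G] (P : Submonoid G) (g h u : G) : Prop :=
  QLe P g u ∧ QLe P h u ∧ ∀ v, QLe P g v → QLe P h v → QLe P u v

/-- `(G, P)` is a quasi-lattice ordered group. -/
structure QuasiLatticeOrdered {G : Type*} [Group G] (P : Submonoid G) : Prop where
  gen : Subgroup.closure (P : Set G) = ⊤
  cap : ∀ g ∈ P, g⁻¹ ∈ P → g = 1
  lub : ∀ g h : G, (∃ u, QLe P g u ∧ QLe P h u) → ∃ u, QLub P g h u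

lemma QLe.refl {G : Type*} [Group G] (P : Submonoid G) (g : G) : QLe P g g := by
  simpa [QLe] using P.one_mem

lemma QLe.trans {G : Type*} [Group G] {P : Submonoid G} {g h k : G}
    (h1 : QLe P g h) (h2 : QLe P h k) : QLe P g k := by
  have := P.mul_mem h1 h2
  simpa [QLe, mul_assoc] using this

lemma QLe.antisymm {G : Type*} [Group G] {P : Submonoid G} (hQL : QuasiLatticeOrdered P)
    {g h : G} (h1 : QLe P g h) (h2 : QLe P h g) : g = h := by
  have h2' : (g⁻¹ * h)⁻¹ ∈ P := by simpa [QLe, mul_inv_rev] using h2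
  have := hQL.cap _ h1 h2'
  have : h = g * 1 := by rw [← this]; group
  simp [this]

/-- The indicator functions `χ_{pP} : P → ℝ`, `p ∈ P`, are linearly independent: if `F ⊆ P`
is finite and `∑_{p ∈ F} c_p χ_{pP}(x) = 0` for all `x ∈ P`, then `c_p = 0` for all `p ∈ F`.
Here, for `p, x ∈ P`, `x ∈ pP` iff `p⁻¹ x ∈ P` iff `QLe P p x`. -/
theorem stmt1 {G : Type*} [Group G] (P : Submonoid G) (hQL : QuasiLatticeOrdered P)
    (F : Finset G) (hF : ↑F ⊆ (P : Set G)) (c : G → ℝ)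
    (hsum : ∀ x ∈ P,
      ∑ p ∈ F, c p * Set.indicator {y | QLe P p y} (fun _ => (1 : ℝ)) x = 0) :
    ∀ p ∈ F, c p = 0 := by
  classical
  induction F using Finset.strongInduction with
  | _ F ih =>
    intro p hp
    -- pick p₀ ∈ F minimizing the number of elements of F below it
    obtain ⟨p₀, hp₀, hmin⟩ := Finset.exists_min_image F
      (fun q => (F.filter (fun r => QLe P r q)).card) ⟨p, hp⟩
    -- p₀ is minimal in F
    have key : ∀ q ∈ F, QLe P q p₀ → q = p₀ := by
      intro q hq hqle
      by_contra hne
      have hss : F.filter (fun r => QLe P r q) ⊂ F.filter (fun r => QLe P r p₀) := by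
        constructor
        · intro r hr
          rw [Finset.mem_filter] at hr ⊢
          exact ⟨hr.1, hr.2.trans hqle⟩
        · intro hsub
          have hp₀mem : p₀ ∈ F.filter (fun r => QLe P r p₀) :=
            Finset.mem_filter.2 ⟨hp₀, QLe.refl P p₀⟩
          have := Finset.mem_filter.1 (hsub hp₀mem)
          exact hne (QLe.antisymm hQL hqle this.2)
      have := Finset.card_lt_card hss
      have := hmin q hq
      omega
    -- evaluate at p₀
    have hc0 : c p₀ = 0 := by
      have := hsum p₀ (hF hp₀)
      rw [Finset.sum_eq_single p₀ (fun q hq hne => by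
        have : ¬ QLe P q p₀ := fun h => hne (key q hq h)
        simp [Set.indicator, this]) (fun h => absurd hp₀ h)] at this
      simpa [Set.indicator, QLe.refl P p₀] using this
    rcases eq_or_ne p p₀ with rfl | hne
    · exact hc0
    · refine ih (F.erase p₀) (Finset.erase_ssubset hp₀)
        (fun x hx => hF (Finset.erase_subset _ _ hx)) ?_ p (Finset.mem_erase.2 ⟨hne, hp⟩)
      intro x hx
      rw [Finset.sum_erase_eq_sub hp₀, hsum x hx, hc0]
      ring
end

section
/- Let (G,P) be a quasi-lattice ordered group. Every set Ω ∈ B_P can be written as a finite disjoint union of sets, each of which is either of the form pP for some p ∈ P, or of the form pΩ_J for some p ∈ P and some finite nonempty subset J ⊆ P∖{e}. -/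
/-- Membership in the algebra `B_P` of subsets of `P` generated by the sets
`pP = {x | p⁻¹ x ∈ P}`, `p ∈ P`: the smallest collection of subsets containing the sets
`pP` and closed under complements in `P`, finite unions and finite intersections. -/
inductive MemBP {G : Type*} [Group G] (P : Submonoid G) : Set G → Prop
  | basic (p : G) (hp : p ∈ P) : MemBP P {x | QLe P p x}
  | compl (Ω : Set G) : MemBP P Ω → MemBP P ((P : Set G) \ Ω)
  | union (Ω₁ Ω₂ : Set G) : MemBP P Ω₁ → MemBP P Ω₂ → MemBP P (Ω₁ ∪ Ω₂)
  | inter (Ω₁ Ω₂ : Set G) : MemBP P Ω₁ → MemBP P Ω₂ → MemBP P (Ω₁ ∩ Ω₂)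

/-- For a finite set `J ⊆ P \ {e}`, `Ω_J = ⋂_{q ∈ J} (P \ qP)`
(with the convention `Ω_∅ = P`). -/
def OmegaJ {G : Type*} [Group G] (P : Submonoid G) (J : Finset G) : Set G :=
  (P : Set G) ∩ ⋂ q ∈ J, {x | QLe P q x}ᶜ

section Aux
variable {G : Type*} [Group G] (P : Submonoid G)

theorem qle_trans {a b c : G} (h1 : QLe P a b) (h2 : QLe P b c) : QLe P a c := by
  have := mul_mem h1 h2
  simpa [QLe, mul_assoc] using this

theorem mem_of_qle {p x : G} (hp : p ∈ P) (h : QLe P p x) : x ∈ P := by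
  simpa using mul_mem hp h

/-- The atom of the pattern `A` relative to the finite family `S` of generators. -/
def Atom (S A : Finset G) : Set G :=
  {x | x ∈ P ∧ ∀ p ∈ S, (QLe P p x ↔ p ∈ A)}

theorem atom_disjoint {S A B : Finset G} (hA : A ⊆ S) (hB : B ⊆ S) (hAB : A ≠ B) :
    Disjoint (Atom P S A) (Atom P S B) := by
  rw [Set.disjoint_left]
  intro x hx hx'
  apply hAB
  ext p
  constructor
  · intro hpA
    exact (hx'.2 p (hA hpA)).mp ((hx.2 p (hA hpA)).mpr hpA)
  · intro hpB
    exact (hx.2 p (hB hpB)).mp ((hx'.2 p (hB hpB)).mpr hpB)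

theorem exists_lub_finset (hQL : QuasiLatticeOrdered P)
    {A : Finset G} {x : G} (hxP : x ∈ P) (hxA : ∀ p ∈ A, QLe P p x) :
    ∃ r ∈ P, ∀ y ∈ P, (QLe P r y ↔ ∀ p ∈ A, QLe P p y) := by
  classical
  induction A using Finset.induction_on with
  | empty => exact ⟨1, one_mem P, fun y hy => by simp [QLe, hy]⟩
  | @insert a A' ha ih =>
    obtain ⟨r, hrP, hriff⟩ := ih (fun p hp => hxA p (Finset.mem_insert_of_mem hp))
    have hrx : QLe P r x := (hriff x hxP).mpr (fun p hp => hxA p (Finset.mem_insert_of_mem hp))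
    have hax : QLe P a x := hxA a (Finset.mem_insert_self a A')
    obtain ⟨u, hu⟩ := hQL.lub r a ⟨x, hrx, hax⟩
    refine ⟨u, mem_of_qle P hrP hu.1, fun y hy => ?_⟩
    constructor
    · intro huy p hp
      rcases Finset.mem_insert.mp hp with rfl | hp'
      · exact qle_trans P hu.2.1 huy
      · exact (hriff y hy).mp (qle_trans P hu.1 huy) p hp'
    · intro h
      exact hu.2.2 y ((hriff y hy).mpr fun p hp => h p (Finset.mem_insert_of_mem hp))
        (h a (Finset.mem_insert_self a A'))

end Aux

section Aux2
variable {G : Type*} [Group G] (P : Submonoid G)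

theorem memBP_good {Ω : Set G} (h : MemBP P Ω) :
    ∃ S : Finset G, Ω ⊆ (P : Set G) ∧
      ∀ x ∈ P, ∀ y ∈ P, (∀ p ∈ S, (QLe P p x ↔ QLe P p y)) → x ∈ Ω → y ∈ Ω := by
  induction h with
  | basic p hp =>
    exact ⟨{p}, fun x hx => mem_of_qle P hp hx,
      fun x _ y _ hpat hx => (hpat p (Finset.mem_singleton_self p)).mp hx⟩
  | compl Ω hΩ ih =>
    obtain ⟨S, hsub, hgood⟩ := ih
    refine ⟨S, Set.diff_subset, fun x hx y hy hpat hxm => ⟨hy, fun hyΩ => ?_⟩⟩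
    exact hxm.2 (hgood y hy x hx (fun p hp => (hpat p hp).symm) hyΩ)
  | union Ω₁ Ω₂ h₁ h₂ ih₁ ih₂ =>
    obtain ⟨S₁, hsub₁, hg₁⟩ := ih₁
    obtain ⟨S₂, hsub₂, hg₂⟩ := ih₂
    classical
    refine ⟨S₁ ∪ S₂, Set.union_subset hsub₁ hsub₂, fun x hx y hy hpat hxm => ?_⟩
    rcases hxm with hxm | hxm
    · exact Or.inl (hg₁ x hx y hy (fun p hp => hpat p (Finset.mem_union_left _ hp)) hxm)
    · exact Or.inr (hg₂ x hx y hy (fun p hp => hpat p (Finset.mem_union_right _ hp)) hxm)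
  | inter Ω₁ Ω₂ h₁ h₂ ih₁ ih₂ =>
    obtain ⟨S₁, hsub₁, hg₁⟩ := ih₁
    obtain ⟨S₂, hsub₂, hg₂⟩ := ih₂
    classical
    refine ⟨S₁ ∪ S₂, fun x hx => hsub₁ hx.1, fun x hx y hy hpat hxm => ?_⟩
    exact ⟨hg₁ x hx y hy (fun p hp => hpat p (Finset.mem_union_left _ hp)) hxm.1,
      hg₂ x hx y hy (fun p hp => hpat p (Finset.mem_union_right _ hp)) hxm.2⟩

end Aux2

section Aux3
variable {G : Type*} [Group G] (P : Submonoid G)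

theorem atom_form (hQL : QuasiLatticeOrdered P) {S A : Finset G} (hA : A ⊆ S)
    (hne : (Atom P S A).Nonempty) :
    (∃ p ∈ P, Atom P S A = {x | QLe P p x}) ∨
    (∃ p ∈ P, ∃ J : Finset G, J.Nonempty ∧ ↑J ⊆ (P : Set G) \ {1} ∧
      Atom P S A = (p * ·) '' OmegaJ P J) := by
  classical
  obtain ⟨x, hxP, hxpat⟩ := hne
  have hxA : ∀ p ∈ A, QLe P p x := fun p hp => (hxpat p (hA hp)).mpr hp
  obtain ⟨r, hrP, hriff⟩ := exists_lub_finset P hQL hxP hxA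
  have hrx : QLe P r x := (hriff x hxP).mpr hxA
  set B := (S \ A).filter (fun q => ∃ u, QLe P q u ∧ QLe P r u) with hB
  have hlub : ∀ q ∈ B, ∃ u, QLub P q r u := fun q hq =>
    hQL.lub q r (Finset.mem_filter.mp hq).2
  set f : G → G := fun q => if h : ∃ u, QLub P q r u then r⁻¹ * h.choose else 1 with hf
  set J := B.image f with hJ
  have hfq : ∀ q ∈ B, ∃ s, QLub P q r s ∧ f q = r⁻¹ * s := by
    intro q hq
    have h := hlub q hq
    exact ⟨h.choose, h.choose_spec, by simp [hf, dif_pos h]⟩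
  -- characterization of the atom
  have hchar : Atom P S A = {y | y ∈ P ∧ QLe P r y ∧ ∀ q ∈ S \ A, ¬ QLe P q y} := by
    ext y
    constructor
    · rintro ⟨hyP, hyp⟩
      refine ⟨hyP, (hriff y hyP).mpr (fun p hp => (hyp p (hA hp)).mpr hp), ?_⟩
      intro q hq
      rw [Finset.mem_sdiff] at hq
      exact fun h => hq.2 ((hyp q hq.1).mp h)
    · rintro ⟨hyP, hry, hnq⟩
      refine ⟨hyP, fun p hp => ?_⟩
      by_cases hpA : p ∈ A
      · exact ⟨fun _ => hpA, fun _ => (hriff y hyP).mp hry p hpA⟩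
      · exact ⟨fun h => absurd h (hnq p (Finset.mem_sdiff.mpr ⟨hp, hpA⟩)),
          fun h => absurd h hpA⟩
  -- key translation
  have hkey : ∀ y ∈ P, QLe P r y →
      ((∀ q ∈ S \ A, ¬ QLe P q y) ↔ ∀ t ∈ J, ¬ QLe P (r * t) y) := by
    intro y hyP hry
    constructor
    · intro h t ht
      obtain ⟨q, hqB, rfl⟩ := Finset.mem_image.mp ht
      obtain ⟨s, hs, hfqs⟩ := hfq q hqB
      rw [hfqs, mul_inv_cancel_left]
      intro hsy
      exact h q (Finset.mem_filter.mp hqB).1 (qle_trans P hs.1 hsy)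
    · intro h q hq hqy
      by_cases hc : ∃ u, QLe P q u ∧ QLe P r u
      · have hqB : q ∈ B := Finset.mem_filter.mpr ⟨hq, hc⟩
        obtain ⟨s, hs, hfqs⟩ := hfq q hqB
        have h' := h (f q) (Finset.mem_image_of_mem f hqB)
        rw [hfqs, mul_inv_cancel_left] at h'
        exact h' (hs.2.2 y hqy hry)
      · exact hc ⟨y, hqy, hry⟩
  have hJP : ↑J ⊆ (P : Set G) \ {1} := by
    intro t ht
    obtain ⟨q, hqB, rfl⟩ := Finset.mem_image.mp (Finset.mem_coe.mp ht)
    obtain ⟨s, hs, hfqs⟩ := hfq q hqB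
    constructor
    · rw [hfqs]
      exact hs.2.1
    · simp only [Set.mem_singleton_iff]
      intro h1
      rw [hfqs] at h1
      obtain rfl : r = s := inv_mul_eq_one.mp h1
      have hq : q ∈ S \ A := (Finset.mem_filter.mp hqB).1
      rw [Finset.mem_sdiff] at hq
      exact hq.2 ((hxpat q hq.1).mp (qle_trans P hs.1 hrx))
  rcases Finset.eq_empty_or_nonempty J with hJe | hJne
  · left
    refine ⟨r, hrP, ?_⟩
    rw [hchar]
    ext y
    simp only [Set.mem_setOf_eq]
    constructor
    · rintro ⟨_, hry, _⟩
      exact hry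
    · intro hry
      have hyP := mem_of_qle P hrP hry
      exact ⟨hyP, hry, (hkey y hyP hry).mpr (by simp [hJe])⟩
  · right
    refine ⟨r, hrP, J, hJne, hJP, ?_⟩
    rw [hchar]
    ext y
    simp only [Set.mem_setOf_eq, Set.mem_image]
    constructor
    · rintro ⟨hyP, hry, hq⟩
      refine ⟨r⁻¹ * y, ⟨hry, ?_⟩, by simp⟩
      simp only [Set.mem_iInter, Set.mem_compl_iff, Set.mem_setOf_eq]
      intro t ht hty
      exact (hkey y hyP hry).mp hq t ht
        (by simpa [QLe, mul_assoc, mul_inv_rev] using hty)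
    · rintro ⟨z, ⟨hzP, hz⟩, rfl⟩
      simp only [Set.mem_iInter, Set.mem_compl_iff, Set.mem_setOf_eq] at hz
      have hyP : r * z ∈ P := mul_mem hrP hzP
      have hry : QLe P r (r * z) := by simpa [QLe] using hzP
      refine ⟨hyP, hry, (hkey (r * z) hyP hry).mpr ?_⟩
      intro t ht hrt
      exact hz t ht (by simpa [QLe, mul_assoc, mul_inv_rev] using hrt)

end Aux3


/-- Every `Ω ∈ B_P` is a finite disjoint union of sets of the form `pP` (`p ∈ P`) or
`p·Ω_J` (`p ∈ P`, `J ⊆ P \ {e}` finite nonempty). -/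
theorem stmt3 {G : Type*} [Group G] (P : Submonoid G) (hQL : QuasiLatticeOrdered P)
    (Ω : Set G) (hΩ : MemBP P Ω) :
    ∃ (n : ℕ) (T : Fin n → Set G),
      (∀ i, (∃ p ∈ P, T i = {x | QLe P p x}) ∨
        (∃ p ∈ P, ∃ J : Finset G, J.Nonempty ∧ ↑J ⊆ (P : Set G) \ {1} ∧
          T i = (p * ·) '' OmegaJ P J)) ∧
      (∀ i j, i ≠ j → Disjoint (T i) (T j)) ∧
      Ω = ⋃ i, T i := by
  classical
  obtain ⟨S, hΩP, hgood⟩ := memBP_good P hΩ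
  set 𝒜 := S.powerset.filter (fun A => ∃ x, x ∈ Atom P S A ∧ x ∈ Ω) with h𝒜
  have hmem : ∀ A ∈ 𝒜, A ⊆ S ∧ ∃ x, x ∈ Atom P S A ∧ x ∈ Ω := by
    intro A hA
    have := Finset.mem_filter.mp hA
    exact ⟨Finset.mem_powerset.mp this.1, this.2⟩
  have hΩeq : ∀ x, x ∈ Ω ↔ ∃ A ∈ 𝒜, x ∈ Atom P S A := by
    intro x
    constructor
    · intro hx
      have hxP : x ∈ P := hΩP hx
      refine ⟨S.filter (fun p => QLe P p x), ?_, hxP, fun p hp => ?_⟩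
      · refine Finset.mem_filter.mpr ⟨Finset.mem_powerset.mpr (Finset.filter_subset _ _),
          x, ⟨hxP, fun p hp => ?_⟩, hx⟩
        simp [Finset.mem_filter, hp]
      · simp [Finset.mem_filter, hp]
    · rintro ⟨A, hA, hxAt⟩
      obtain ⟨_, y, hyAt, hyΩ⟩ := hmem A hA
      exact hgood y hyAt.1 x hxAt.1
        (fun p hp => (hyAt.2 p hp).trans (hxAt.2 p hp).symm) hyΩ
  set L := 𝒜.toList with hL
  have hLnd : L.Nodup := Finset.nodup_toList 𝒜
  have hLmem : ∀ A, A ∈ 𝒜 ↔ A ∈ L := fun A => (Finset.mem_toList).symm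
  refine ⟨L.length, fun i => Atom P S (L.get i), ?_, ?_, ?_⟩
  · intro i
    have hiA : L.get i ∈ 𝒜 := (hLmem _).mpr (L.get_mem i)
    obtain ⟨hsub, y, hyAt, _⟩ := hmem _ hiA
    exact atom_form P hQL hsub ⟨y, hyAt⟩
  · intro i j hij
    have hiA := hmem _ ((hLmem _).mpr (L.get_mem i))
    have hjA := hmem _ ((hLmem _).mpr (L.get_mem j))
    exact atom_disjoint P hiA.1 hjA.1 ((List.nodup_iff_injective_get.mp hLnd).ne hij)
  · ext x
    rw [hΩeq x]
    simp only [Set.mem_iUnion]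
    constructor
    · rintro ⟨A, hA, hx⟩
      obtain ⟨i, rfl⟩ := List.mem_iff_get.mp ((hLmem A).mp hA)
      exact ⟨i, hx⟩
    · rintro ⟨i, hx⟩
      exact ⟨L.get i, (hLmem _).mpr (L.get_mem i), hx⟩
end

section
/- Let (G,P) be a quasi-lattice ordered group. For every Ω ∈ B_P and every p ∈ Ω, there exists a finite subset J ⊆ P∖{e} such that p ∈ pΩ_J ⊆ Ω. -/
lemma memBP_subset {G : Type*} [Group G] (P : Submonoid G) (Ω : Set G) (hΩ : MemBP P Ω) :
    Ω ⊆ (P : Set G) := by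
  induction hΩ with
  | basic q hq =>
    intro x hx
    have : q * (q⁻¹ * x) ∈ P := mul_mem hq hx
    simpa using this
  | compl Ω h ih => exact Set.diff_subset
  | union Ω₁ Ω₂ h₁ h₂ ih₁ ih₂ => exact Set.union_subset ih₁ ih₂
  | inter Ω₁ Ω₂ h₁ h₂ ih₁ ih₂ => exact Set.Subset.trans Set.inter_subset_left ih₁

lemma omegaJ_anti {G : Type*} [Group G] (P : Submonoid G) {J₁ J₂ : Finset G} (h : J₁ ⊆ J₂) :
    OmegaJ P J₂ ⊆ OmegaJ P J₁ := by
  intro x hx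
  exact ⟨hx.1, Set.mem_iInter₂.mpr fun q hq => Set.mem_iInter₂.mp hx.2 q (h hq)⟩

lemma one_mem_omegaJ {G : Type*} [Group G] (P : Submonoid G) (hQL : QuasiLatticeOrdered P)
    {J : Finset G} (hJ : ↑J ⊆ (P : Set G) \ {1}) : (1 : G) ∈ OmegaJ P J := by
  refine ⟨one_mem P, ?_⟩
  simp only [Set.mem_iInter]
  intro q hq
  intro hcon
  have hq' := hJ hq
  have : q⁻¹ ∈ P := by simpa [QLe] using hcon
  exact hq'.2 (hQL.cap q hq'.1 this)

lemma key_lemma {G : Type*} [Group G] (P : Submonoid G) (hQL : QuasiLatticeOrdered P)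
    (Ω : Set G) (hΩ : MemBP P Ω) :
    (∀ p ∈ P, p ∈ Ω → ∃ J : Finset G, ↑J ⊆ (P : Set G) \ {1} ∧
      (p * ·) '' OmegaJ P J ⊆ Ω) ∧
    (∀ p ∈ P, p ∉ Ω → ∃ J : Finset G, ↑J ⊆ (P : Set G) \ {1} ∧
      (p * ·) '' OmegaJ P J ⊆ (P : Set G) \ Ω) := by
  classical
  induction hΩ with
  | basic q hq =>
    constructor
    · intro p hpP hpΩ
      refine ⟨∅, by simp, ?_⟩
      rintro _ ⟨w, hw, rfl⟩
      have hwP : w ∈ P := hw.1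
      have : q⁻¹ * p * w ∈ P := mul_mem hpΩ hwP
      simpa [QLe, mul_assoc] using this
    · intro p hpP hpΩ
      by_cases h : ∃ u, QLe P p u ∧ QLe P q u
      · obtain ⟨u, hu⟩ := hQL.lub p q h
        have hr : p⁻¹ * u ∈ P := hu.1
        have hrne : p⁻¹ * u ≠ 1 := by
          intro hcon
          have hup : u = p := (inv_mul_eq_one.mp hcon).symm
          exact hpΩ (by simpa [hup] using hu.2.1)
        refine ⟨{p⁻¹ * u}, by simpa using ⟨hr, hrne⟩, ?_⟩
        rintro _ ⟨w, hw, rfl⟩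
        have hwP : w ∈ P := hw.1
        have hwq : ¬ QLe P (p⁻¹ * u) w := by
          have := hw.2
          simp only [Set.mem_iInter, Finset.mem_singleton] at this
          simpa using this (p⁻¹ * u) rfl
        refine ⟨mul_mem hpP hwP, ?_⟩
        intro hcon
        have hcon' : QLe P q (p * w) := hcon
        have h1 : QLe P p (p * w) := by simpa [QLe] using hwP
        have h2 : QLe P u (p * w) := hu.2.2 (p * w) h1 hcon'
        apply hwq
        have : (p⁻¹ * u)⁻¹ * w = u⁻¹ * (p * w) := by group
        simpa [QLe, this, mul_assoc] using h2
      · refine ⟨∅, by simp, ?_⟩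
        rintro _ ⟨w, hw, rfl⟩
        have hwP : w ∈ P := hw.1
        refine ⟨mul_mem hpP hwP, ?_⟩
        intro hcon
        exact h ⟨p * w, by simpa [QLe] using hwP, hcon⟩
  | compl Ω h ih =>
    obtain ⟨ih1, ih2⟩ := ih
    constructor
    · intro p hpP hpΩ
      exact ih2 p hpP hpΩ.2
    · intro p hpP hpΩ
      have hpΩ' : p ∈ Ω := by
        by_contra hc
        exact hpΩ ⟨hpP, hc⟩
      obtain ⟨J, hJ, hsub⟩ := ih1 p hpP hpΩ'
      refine ⟨J, hJ, ?_⟩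
      rintro _ ⟨w, hw, rfl⟩
      exact ⟨mul_mem hpP hw.1, fun hc => hc.2 (hsub ⟨w, hw, rfl⟩)⟩
  | union Ω₁ Ω₂ h₁ h₂ ih₁ ih₂ =>
    constructor
    · intro p hpP hpΩ
      rcases hpΩ with hpΩ | hpΩ
      · obtain ⟨J, hJ, hsub⟩ := ih₁.1 p hpP hpΩ
        exact ⟨J, hJ, hsub.trans Set.subset_union_left⟩
      · obtain ⟨J, hJ, hsub⟩ := ih₂.1 p hpP hpΩ
        exact ⟨J, hJ, hsub.trans Set.subset_union_right⟩
    · intro p hpP hpΩ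
      obtain ⟨J₁, hJ₁, hsub₁⟩ := ih₁.2 p hpP (fun hc => hpΩ (Or.inl hc))
      obtain ⟨J₂, hJ₂, hsub₂⟩ := ih₂.2 p hpP (fun hc => hpΩ (Or.inr hc))
      refine ⟨J₁ ∪ J₂, ?_, ?_⟩
      · push_cast
        exact Set.union_subset hJ₁ hJ₂
      · rintro _ ⟨w, hw, rfl⟩
        have m1 := hsub₁ ⟨w, omegaJ_anti P Finset.subset_union_left hw, rfl⟩
        have m2 := hsub₂ ⟨w, omegaJ_anti P Finset.subset_union_right hw, rfl⟩
        exact ⟨m1.1, fun hc => hc.elim m1.2 m2.2⟩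
  | inter Ω₁ Ω₂ h₁ h₂ ih₁ ih₂ =>
    constructor
    · intro p hpP hpΩ
      obtain ⟨J₁, hJ₁, hsub₁⟩ := ih₁.1 p hpP hpΩ.1
      obtain ⟨J₂, hJ₂, hsub₂⟩ := ih₂.1 p hpP hpΩ.2
      refine ⟨J₁ ∪ J₂, ?_, ?_⟩
      · push_cast
        exact Set.union_subset hJ₁ hJ₂
      · rintro _ ⟨w, hw, rfl⟩
        exact ⟨hsub₁ ⟨w, omegaJ_anti P Finset.subset_union_left hw, rfl⟩,
          hsub₂ ⟨w, omegaJ_anti P Finset.subset_union_right hw, rfl⟩⟩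
    · intro p hpP hpΩ
      rcases Classical.em (p ∈ Ω₁) with hp1 | hp1
      · obtain ⟨J, hJ, hsub⟩ := ih₂.2 p hpP (fun hc => hpΩ ⟨hp1, hc⟩)
        exact ⟨J, hJ, fun x hx => ⟨(hsub hx).1, fun hc => (hsub hx).2 hc.2⟩⟩
      · obtain ⟨J, hJ, hsub⟩ := ih₁.2 p hpP hp1
        exact ⟨J, hJ, fun x hx => ⟨(hsub hx).1, fun hc => (hsub hx).2 hc.1⟩⟩

/-- For every `Ω ∈ B_P` and `p ∈ Ω` there is a finite `J ⊆ P \ {e}` with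
`p ∈ p·Ω_J ⊆ Ω`. -/
theorem stmt4 {G : Type*} [Group G] (P : Submonoid G) (hQL : QuasiLatticeOrdered P)
    (Ω : Set G) (hΩ : MemBP P Ω) (p : G) (hp : p ∈ Ω) :
    ∃ J : Finset G, ↑J ⊆ (P : Set G) \ {1} ∧
      p ∈ (p * ·) '' OmegaJ P J ∧ (p * ·) '' OmegaJ P J ⊆ Ω := by
  have hpP : p ∈ P := memBP_subset P Ω hΩ hp
  obtain ⟨J, hJ, hsub⟩ := (key_lemma P hQL Ω hΩ).1 p hpP hp
  exact ⟨J, hJ, ⟨1, one_mem_omegaJ P hQL hJ, mul_one p⟩, hsub⟩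
end

section
/- Let (G,P) be a quasi-lattice ordered group and let μ be a finitely additive probability measure on (P,B_P) such that the family (μ(pP))_{p∈P} is summable. Then there exists a countably additive probability measure ν, defined on the σ-algebra of all subsets of P, such that ν(Ω) = μ(Ω) for every Ω ∈ B_P. -/
set_option linter.unusedSectionVars false
namespace QLProof

open Finset Set

variable {G : Type*} [Group G] {P : Submonoid G}

theorem qle_refl (g : G) : QLe P g g := by unfold QLe; rw [inv_mul_cancel]; exact one_mem P

theorem qle_trans {a b c : G} (h1 : QLe P a b) (h2 : QLe P b c) : QLe P a c := by
  have := mul_mem h1 h2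
  simpa [QLe, mul_assoc] using this

theorem qle_mem {g x : G} (hg : g ∈ P) (h : QLe P g x) : x ∈ P := by
  have := mul_mem hg h
  simpa using this

theorem qle_one {x : G} : QLe P 1 x ↔ x ∈ P := by simp [QLe]

theorem qle_mul {g q : G} (hq : q ∈ P) : QLe P g (g * q) := by
  simpa [QLe, mul_assoc] using hq

/-- `bset g = gP`. -/
def bset (P : Submonoid G) (g : G) : Set G := {x | QLe P g x}

theorem bset_subset {g : G} (hg : g ∈ P) : bset P g ⊆ (P : Set G) :=
  fun _ hx => qle_mem hg hx

theorem memBP_subset {Ω : Set G} (h : MemBP P Ω) : Ω ⊆ (P : Set G) := by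
  induction h with
  | basic p hp => exact fun x hx => qle_mem hp hx
  | compl Ω h ih => exact Set.diff_subset
  | union Ω₁ Ω₂ h1 h2 ih1 ih2 => exact Set.union_subset ih1 ih2
  | inter Ω₁ Ω₂ h1 h2 ih1 ih2 => exact Set.inter_subset_left.trans ih1

theorem memBP_P : MemBP P (P : Set G) := by
  have := MemBP.basic (P := P) 1 (one_mem P)
  have h : {x | QLe P 1 x} = (P : Set G) := by ext x; simp [qle_one]
  rwa [h] at this

theorem memBP_empty : MemBP P (∅ : Set G) := by
  have := MemBP.compl _ (memBP_P (P := P))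
  simpa using this

theorem memBP_diff {Ω₁ Ω₂ : Set G} (h1 : MemBP P Ω₁) (h2 : MemBP P Ω₂) :
    MemBP P (Ω₁ \ Ω₂) := by
  have : Ω₁ \ Ω₂ = Ω₁ ∩ ((P : Set G) \ Ω₂) := by
    apply Set.eq_of_subset_of_subset
    · intro x hx; exact ⟨hx.1, memBP_subset h1 hx.1, hx.2⟩
    · intro x hx; exact ⟨hx.1, hx.2.2⟩
  rw [this]
  exact MemBP.inter _ _ h1 (MemBP.compl _ h2)

theorem memBP_biUnion {ι : Type*} {F : Finset ι} {A : ι → Set G}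
    (h : ∀ i ∈ F, MemBP P (A i)) : MemBP P (⋃ i ∈ F, A i) := by
  classical
  induction F using Finset.induction with
  | empty => simpa using memBP_empty
  | insert a F hnotmem ih =>
    rw [Finset.set_biUnion_insert]
    exact MemBP.union _ _ (h a (Finset.mem_insert_self a F))
      (ih fun i hi => h i (Finset.mem_insert_of_mem hi))

section mu
variable {μ : Set G → ℝ}
variable (hpos : ∀ Ω : Set G, MemBP P Ω → 0 ≤ μ Ω)
variable (hadd : ∀ Ω₁ Ω₂ : Set G, MemBP P Ω₁ → MemBP P Ω₂ → Disjoint Ω₁ Ω₂ →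
      μ (Ω₁ ∪ Ω₂) = μ Ω₁ + μ Ω₂)

include hadd

theorem mu_empty : μ ∅ = 0 := by
  have := hadd ∅ ∅ memBP_empty memBP_empty (by simp)
  simpa using this

include hpos

theorem mu_diff {Ω₁ Ω₂ : Set G} (h1 : MemBP P Ω₁) (h2 : MemBP P Ω₂) (hss : Ω₁ ⊆ Ω₂) :
    μ (Ω₂ \ Ω₁) = μ Ω₂ - μ Ω₁ := by
  have hu : Ω₁ ∪ Ω₂ \ Ω₁ = Ω₂ := Set.union_diff_cancel hss
  have := hadd Ω₁ (Ω₂ \ Ω₁) h1 (memBP_diff h2 h1) disjoint_sdiff_right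
  rw [hu] at this
  linarith

theorem mu_mono {Ω₁ Ω₂ : Set G} (h1 : MemBP P Ω₁) (h2 : MemBP P Ω₂) (hss : Ω₁ ⊆ Ω₂) :
    μ Ω₁ ≤ μ Ω₂ := by
  have := mu_diff hpos hadd h1 h2 hss
  have h0 := hpos _ (memBP_diff h2 h1)
  linarith

theorem mu_biUnion {ι : Type*} {F : Finset ι} {A : ι → Set G}
    (h : ∀ i ∈ F, MemBP P (A i))
    (hdis : ∀ i ∈ F, ∀ j ∈ F, i ≠ j → Disjoint (A i) (A j)) :
    μ (⋃ i ∈ F, A i) = ∑ i ∈ F, μ (A i) := by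
  classical
  induction F using Finset.induction with
  | empty => simpa using mu_empty hadd
  | insert a F hnotmem ih =>
    rw [Finset.set_biUnion_insert, Finset.sum_insert hnotmem]
    rw [hadd _ _ (h a (Finset.mem_insert_self a F))
      (memBP_biUnion fun i hi => h i (Finset.mem_insert_of_mem hi))
      (Set.disjoint_iUnion₂_right.2 fun i hi =>
        hdis a (Finset.mem_insert_self a F) i (Finset.mem_insert_of_mem hi)
          (fun he => hnotmem (he ▸ hi)))]
    rw [ih (fun i hi => h i (Finset.mem_insert_of_mem hi))
      (fun i hi j hj hij => hdis i (Finset.mem_insert_of_mem hi) j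
        (Finset.mem_insert_of_mem hj) hij)]

theorem mu_biUnion_le {ι : Type*} {F : Finset ι} {A : ι → Set G}
    (h : ∀ i ∈ F, MemBP P (A i)) :
    μ (⋃ i ∈ F, A i) ≤ ∑ i ∈ F, μ (A i) := by
  classical
  induction F using Finset.induction with
  | empty => simp [mu_empty hadd]
  | insert a F hnotmem ih =>
    rw [Finset.set_biUnion_insert, Finset.sum_insert hnotmem]
    have hA := h a (Finset.mem_insert_self a F)
    have hU : MemBP P (⋃ i ∈ F, A i) := memBP_biUnion fun i hi => h i (Finset.mem_insert_of_mem hi)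
    have key : μ (A a ∪ ⋃ i ∈ F, A i) ≤ μ (A a) + μ ((⋃ i ∈ F, A i) \ A a) := by
      have := hadd (A a) ((⋃ i ∈ F, A i) \ A a) hA (memBP_diff hU hA) disjoint_sdiff_right
      rw [Set.union_diff_self] at this
      exact le_of_eq this
    have h2 : μ ((⋃ i ∈ F, A i) \ A a) ≤ μ (⋃ i ∈ F, A i) :=
      mu_mono hpos hadd (memBP_diff hU hA) hU Set.diff_subset
    have h3 := ih (fun i hi => h i (Finset.mem_insert_of_mem hi))
    linarith

theorem mu_disjoint_sum_le {ι : Type*} {F : Finset ι} {A : ι → Set G} {Ω : Set G}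
    (h : ∀ i ∈ F, MemBP P (A i)) (hΩ : MemBP P Ω)
    (hsub : ∀ i ∈ F, A i ⊆ Ω)
    (hdis : ∀ i ∈ F, ∀ j ∈ F, i ≠ j → Disjoint (A i) (A j)) :
    ∑ i ∈ F, μ (A i) ≤ μ Ω := by
  rw [← mu_biUnion hpos hadd h hdis]
  exact mu_mono hpos hadd (memBP_biUnion h) hΩ (Set.iUnion₂_subset hsub)

end mu

end QLProof
namespace QLProof

open Finset Set

variable {G : Type*} [Group G] {P : Submonoid G}

/-- `pOm P p J = pP ∩ ⋂_{q ∈ J} (pqP)ᶜ`. -/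
def pOm (P : Submonoid G) (p : G) (J : Finset G) : Set G :=
  bset P p ∩ ⋂ q ∈ J, (bset P (p * q))ᶜ

/-- Admissible finite sets `J ⊆ P \ {1}`. -/
def Jok (P : Submonoid G) (J : Finset G) : Prop := ∀ q ∈ J, q ∈ P ∧ q ≠ 1

theorem jok_empty : Jok P (∅ : Finset G) := by intro q hq; simp at hq

theorem jok_union {J J' : Finset G} [DecidableEq G] (h : Jok P J) (h' : Jok P J') :
    Jok P (J ∪ J') := by
  intro q hq
  rcases Finset.mem_union.1 hq with h1 | h1
  · exact h q h1
  · exact h' q h1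

theorem pOm_subset_bset (p : G) (J : Finset G) : pOm P p J ⊆ bset P p :=
  Set.inter_subset_left

theorem pOm_subset_P {p : G} (hp : p ∈ P) (J : Finset G) : pOm P p J ⊆ (P : Set G) :=
  (pOm_subset_bset p J).trans (bset_subset hp)

theorem pOm_anti (p : G) {J J' : Finset G} (h : J ⊆ J') : pOm P p J' ⊆ pOm P p J := by
  intro x hx
  exact ⟨hx.1, by
    simp only [Set.mem_iInter] at *
    intro q hq
    exact (Set.mem_iInter₂.1 hx.2) q (h hq)⟩

theorem mem_pOm {p x : G} {J : Finset G} :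
    x ∈ pOm P p J ↔ QLe P p x ∧ ∀ q ∈ J, ¬ QLe P (p * q) x := by
  simp [pOm, bset]

theorem pOm_empty (p : G) : pOm P p (∅ : Finset G) = bset P p := by
  simp [pOm]

theorem memBP_pOm {p : G} (hp : p ∈ P) {J : Finset G} (hJ : Jok P J) :
    MemBP P (pOm P p J) := by
  classical
  induction J using Finset.induction with
  | empty => rw [pOm_empty]; exact MemBP.basic p hp
  | insert a J hnotmem ih =>
    have ha := hJ a (Finset.mem_insert_self a J)
    have heq : pOm P p (insert a J) = ((P : Set G) \ bset P (p * a)) ∩ pOm P p J := by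
      ext x
      simp only [mem_pOm, Set.mem_inter_iff, Set.mem_diff]
      constructor
      · rintro ⟨h1, h2⟩
        exact ⟨⟨qle_mem hp h1, h2 a (Finset.mem_insert_self a J)⟩, h1,
          fun q hq => h2 q (Finset.mem_insert_of_mem hq)⟩
      · rintro ⟨⟨hxP, hna⟩, h1, h2⟩
        refine ⟨h1, fun q hq => ?_⟩
        rcases Finset.mem_insert.1 hq with rfl | hq
        · exact hna
        · exact h2 q hq
    rw [heq]
    exact MemBP.inter _ _ (MemBP.compl _ (MemBP.basic _ (mul_mem hp ha.1)))
      (ih fun q hq => hJ q (Finset.mem_insert_of_mem hq))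

theorem self_mem_pOm (hQL : QuasiLatticeOrdered P) {p : G} (hp : p ∈ P) {J : Finset G}
    (hJ : Jok P J) : p ∈ pOm P p J := by
  rw [mem_pOm]
  refine ⟨qle_refl p, fun q hq hle => ?_⟩
  obtain ⟨hqP, hq1⟩ := hJ q hq
  have : (p * q)⁻¹ * p = q⁻¹ := by group
  rw [QLe, this] at hle
  exact hq1 (hQL.cap q hqP hle)

theorem pOm_diff_subset [DecidableEq G] (p : G) {J J' : Finset G} (h : J ⊆ J') :
    pOm P p J \ pOm P p J' ⊆ ⋃ q ∈ J' \ J, (pOm P p J ∩ bset P (p * q)) := by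
  classical
  intro x hx
  obtain ⟨hx1, hx2⟩ := hx
  rw [mem_pOm] at hx2
  push_neg at hx2
  obtain ⟨q, hq, hle⟩ := hx2 ((mem_pOm.1 hx1).1)
  have hqJ : q ∉ J := fun hqJ => (mem_pOm.1 hx1).2 q hqJ hle
  exact Set.mem_biUnion (Finset.mem_sdiff.2 ⟨hq, hqJ⟩) ⟨hx1, hle⟩

section cc
variable {μ : Set G → ℝ}
variable (hpos : ∀ Ω : Set G, MemBP P Ω → 0 ≤ μ Ω)
variable (hadd : ∀ Ω₁ Ω₂ : Set G, MemBP P Ω₁ → MemBP P Ω₂ → Disjoint Ω₁ Ω₂ →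
      μ (Ω₁ ∪ Ω₂) = μ Ω₁ + μ Ω₂)

/-- The candidate atom mass at `p`. -/
noncomputable def cc (P : Submonoid G) (μ : Set G → ℝ) (p : G) : ℝ :=
  sInf {t | ∃ J, Jok P J ∧ t = μ (pOm P p J)}

theorem cc_set_nonempty (p : G) : {t | ∃ J, Jok P J ∧ t = μ (pOm P p J)}.Nonempty :=
  ⟨μ (pOm P p ∅), ∅, jok_empty, rfl⟩

include hpos in
theorem cc_set_bddBelow {p : G} (hp : p ∈ P) :
    BddBelow {t | ∃ J, Jok P J ∧ t = μ (pOm P p J)} := by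
  refine ⟨0, fun t ht => ?_⟩
  obtain ⟨J, hJ, rfl⟩ := ht
  exact hpos _ (memBP_pOm hp hJ)

include hpos in
theorem cc_nonneg {p : G} (hp : p ∈ P) : 0 ≤ cc P μ p := by
  apply le_csInf (cc_set_nonempty p)
  intro t ht
  obtain ⟨J, hJ, rfl⟩ := ht
  exact hpos _ (memBP_pOm hp hJ)

include hpos in
theorem cc_le {p : G} (hp : p ∈ P) {J : Finset G} (hJ : Jok P J) :
    cc P μ p ≤ μ (pOm P p J) :=
  csInf_le (cc_set_bddBelow hpos hp) ⟨J, hJ, rfl⟩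

include hpos in
theorem cc_le_bset {p : G} (hp : p ∈ P) : cc P μ p ≤ μ (bset P p) := by
  have := cc_le hpos hp (jok_empty (P := P))
  rwa [pOm_empty] at this

include hpos hadd in
theorem cc_lt {p : G} (hp : p ∈ P) {ε : ℝ} (hε : 0 < ε) {J₀ : Finset G} (hJ₀ : Jok P J₀) :
    ∃ J, Jok P J ∧ J₀ ⊆ J ∧ μ (pOm P p J) < cc P μ p + ε := by
  classical
  have h : sInf {t | ∃ J, Jok P J ∧ t = μ (pOm P p J)} < cc P μ p + ε := by
    simp only [cc]; linarith
  obtain ⟨t, ht, hlt⟩ := exists_lt_of_csInf_lt (cc_set_nonempty p) h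
  obtain ⟨J, hJ, rfl⟩ := ht
  refine ⟨J ∪ J₀, jok_union hJ hJ₀, Finset.subset_union_right, ?_⟩
  calc μ (pOm P p (J ∪ J₀)) ≤ μ (pOm P p J) :=
        mu_mono hpos hadd (memBP_pOm hp (jok_union hJ hJ₀)) (memBP_pOm hp hJ)
          (pOm_anti p Finset.subset_union_left)
    _ < cc P μ p + ε := hlt

end cc

end QLProof
namespace QLProof

open Finset Set

variable {G : Type*} [Group G] {P : Submonoid G}

/-- Lemma A': for `p ∈ P` and `Ω ∈ B_P` there is an admissible `J ⊇ J₀` such that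
`pΩ_J ⊆ Ω` if `p ∈ Ω`, and `pΩ_J ∩ Ω = ∅` if `p ∉ Ω`. -/
theorem approx [DecidableEq G] (hQL : QuasiLatticeOrdered P) {Ω : Set G} (hΩ : MemBP P Ω)
    {p : G} (hp : p ∈ P) :
    ∀ J₀ : Finset G, Jok P J₀ → ∃ J, Jok P J ∧ J₀ ⊆ J ∧
      (p ∈ Ω → pOm P p J ⊆ Ω) ∧ (p ∉ Ω → ∀ x ∈ pOm P p J, x ∉ Ω) := by
  induction hΩ with
  | basic q hq =>
    intro J₀ hJ₀
    by_cases hpq : QLe P q p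
    · exact ⟨J₀, hJ₀, Finset.Subset.refl _, fun _ x hx => qle_trans hpq (mem_pOm.1 hx).1,
        fun hpn => absurd hpq hpn⟩
    · by_cases hub : ∃ v, QLe P p v ∧ QLe P q v
      · obtain ⟨u, hu1, hu2, hu3⟩ := hQL.lub p q hub
        set r := p⁻¹ * u with hr
        have hrP : r ∈ P := hu1
        have hpr : p * r = u := by rw [hr]; group
        have hr1 : r ≠ 1 := by
          intro h
          rw [h, mul_one] at hpr
          exact hpq (hpr ▸ hu2)
        refine ⟨insert r J₀, ?_, Finset.subset_insert r J₀, fun hmem => absurd hmem hpq,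
          fun _ x hx hxq => ?_⟩
        · intro a ha
          rcases Finset.mem_insert.1 ha with rfl | ha
          · exact ⟨hrP, hr1⟩
          · exact hJ₀ a ha
        · have hux : QLe P u x := hu3 x (mem_pOm.1 hx).1 hxq
          exact (mem_pOm.1 hx).2 r (Finset.mem_insert_self r J₀) (hpr ▸ hux)
      · refine ⟨J₀, hJ₀, Finset.Subset.refl _, fun hmem => absurd hmem hpq,
          fun _ x hx hxq => hub ⟨x, (mem_pOm.1 hx).1, hxq⟩⟩
  | compl Ω hΩ ih =>
    intro J₀ hJ₀
    obtain ⟨J, hJ, hsub, h1, h2⟩ := ih J₀ hJ₀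
    refine ⟨J, hJ, hsub, fun hmem x hx => ?_, fun hmem x hx hxmem => ?_⟩
    · exact ⟨pOm_subset_P hp J hx, h2 hmem.2 x hx⟩
    · have hpΩ : p ∈ Ω := by
        by_contra hpn
        exact hmem ⟨hp, hpn⟩
      exact hxmem.2 (h1 hpΩ hx)
  | union Ω₁ Ω₂ h1 h2 ih1 ih2 =>
    intro J₀ hJ₀
    obtain ⟨J₁, hJ₁, hs₁, ha₁, hb₁⟩ := ih1 J₀ hJ₀
    obtain ⟨J₂, hJ₂, hs₂, ha₂, hb₂⟩ := ih2 J₁ hJ₁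
    refine ⟨J₂, hJ₂, hs₁.trans hs₂, fun hmem x hx => ?_, fun hmem x hx hxmem => ?_⟩
    · rcases hmem with hm | hm
      · exact Or.inl (ha₁ hm (pOm_anti p hs₂ hx))
      · exact Or.inr (ha₂ hm hx)
    · rcases hxmem with hm | hm
      · exact hb₁ (fun h => hmem (Or.inl h)) x (pOm_anti p hs₂ hx) hm
      · exact hb₂ (fun h => hmem (Or.inr h)) x hx hm
  | inter Ω₁ Ω₂ h1 h2 ih1 ih2 =>
    intro J₀ hJ₀
    obtain ⟨J₁, hJ₁, hs₁, ha₁, hb₁⟩ := ih1 J₀ hJ₀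
    obtain ⟨J₂, hJ₂, hs₂, ha₂, hb₂⟩ := ih2 J₁ hJ₁
    refine ⟨J₂, hJ₂, hs₁.trans hs₂, fun hmem x hx => ?_, fun hmem x hx hxmem => ?_⟩
    · exact ⟨ha₁ hmem.1 (pOm_anti p hs₂ hx), ha₂ hmem.2 hx⟩
    · by_cases hp1 : p ∈ Ω₁
      · have hp2 : p ∉ Ω₂ := fun h => hmem ⟨hp1, h⟩
        exact hb₂ hp2 x hx hxmem.2
      · exact hb₁ hp1 x (pOm_anti p hs₂ hx) hxmem.1

/-- Lemma B: distinct `p, p'` can be separated by enlarging `J, J'`. -/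
theorem sep [DecidableEq G] (hQL : QuasiLatticeOrdered P) {p p' : G} (hp : p ∈ P)
    (hp' : p' ∈ P) (hne : p ≠ p') {J J' : Finset G} (hJ : Jok P J) (hJ' : Jok P J') :
    ∃ K K', Jok P K ∧ Jok P K' ∧ J ⊆ K ∧ J' ⊆ K' ∧
      Disjoint (pOm P p K) (pOm P p' K') := by
  by_cases hub : ∃ v, QLe P p v ∧ QLe P p' v
  · obtain ⟨u, hu1, hu2, hu3⟩ := hQL.lub p p' hub
    set r := p⁻¹ * u with hr
    set r' := p'⁻¹ * u with hr'
    have hpr : p * r = u := by rw [hr]; group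
    have hpr' : p' * r' = u := by rw [hr']; group
    have hrP : r ∈ P := hu1
    have hrP' : r' ∈ P := hu2
    by_cases hr1 : r = 1
    · have hu_eq : u = p := by rw [← hpr, hr1, mul_one]
      have hr'1 : r' ≠ 1 := by
        intro h
        rw [h, mul_one] at hpr'
        exact hne (by rw [← hu_eq, ← hpr'])
      refine ⟨J, insert r' J', hJ, ?_, Finset.Subset.refl _, Finset.subset_insert _ _, ?_⟩
      · intro a ha
        rcases Finset.mem_insert.1 ha with rfl | ha
        · exact ⟨hrP', hr'1⟩
        · exact hJ' a ha
      · rw [Set.disjoint_left]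
        intro x hx hx'
        have hux : QLe P u x := hu3 x (mem_pOm.1 hx).1 (mem_pOm.1 hx').1
        exact (mem_pOm.1 hx').2 r' (Finset.mem_insert_self _ _) (hpr' ▸ hux)
    · refine ⟨insert r J, J', ?_, hJ', Finset.subset_insert _ _, Finset.Subset.refl _, ?_⟩
      · intro a ha
        rcases Finset.mem_insert.1 ha with rfl | ha
        · exact ⟨hrP, hr1⟩
        · exact hJ a ha
      · rw [Set.disjoint_left]
        intro x hx hx'
        have hux : QLe P u x := hu3 x (mem_pOm.1 hx).1 (mem_pOm.1 hx').1
        exact (mem_pOm.1 hx).2 r (Finset.mem_insert_self _ _) (hpr ▸ hux)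
  · refine ⟨J, J', hJ, hJ', Finset.Subset.refl _, Finset.Subset.refl _, ?_⟩
    rw [Set.disjoint_left]
    intro x hx hx'
    exact hub ⟨x, (mem_pOm.1 hx).1, (mem_pOm.1 hx').1⟩

end QLProof
namespace QLProof

open Finset Set

variable {G : Type*} [Group G] {P : Submonoid G}

theorem sep_many [DecidableEq G] (hQL : QuasiLatticeOrdered P) {a : G} (ha : a ∈ P) :
    ∀ F : Finset G, ↑F ⊆ (P : Set G) → a ∉ F →
    ∀ K : G → Finset G, (∀ p ∈ F, Jok P (K p)) → ∀ Ja : Finset G, Jok P Ja →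
    ∃ (Ja' : Finset G) (K' : G → Finset G), Jok P Ja' ∧ Ja ⊆ Ja' ∧
      (∀ p ∈ F, Jok P (K' p) ∧ K p ⊆ K' p) ∧
      ∀ b ∈ F, Disjoint (pOm P a Ja') (pOm P b (K' b)) := by
  intro F
  induction F using Finset.induction with
  | empty =>
    intro _ _ K hK Ja hJa
    exact ⟨Ja, K, hJa, Finset.Subset.refl _, fun p hp => absurd hp (by simp),
      fun b hb => absurd hb (by simp)⟩
  | insert b F hb ih =>
    intro hFP haF K hK Ja hJa
    have hFP' : ↑F ⊆ (P : Set G) := fun x hx => hFP (Finset.mem_insert_of_mem hx)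
    have haF' : a ∉ F := fun h => haF (Finset.mem_insert_of_mem h)
    obtain ⟨Ja₁, K₁, hJa₁, hJaJa₁, hK₁, hdis₁⟩ := ih hFP' haF' K
      (fun p hp => hK p (Finset.mem_insert_of_mem hp)) Ja hJa
    have hbP : b ∈ P := hFP (Finset.mem_insert_self b F)
    have hab : a ≠ b := fun h => haF (h ▸ Finset.mem_insert_self b F)
    obtain ⟨Ka, Kb, hKa, hKb, hJaKa, hKbK, hdis⟩ :=
      sep hQL ha hbP hab hJa₁ (hK b (Finset.mem_insert_self b F))
    refine ⟨Ka, Function.update K₁ b Kb, hKa, hJaJa₁.trans hJaKa, ?_, ?_⟩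
    · intro p hp
      rcases Finset.mem_insert.1 hp with rfl | hp
      · rw [Function.update_self]
        exact ⟨hKb, hKbK⟩
      · have hpb : p ≠ b := fun h => hb (h ▸ hp)
        rw [Function.update_of_ne hpb]
        exact ⟨(hK₁ p hp).1, (hK₁ p hp).2⟩
    · intro c hc
      rcases Finset.mem_insert.1 hc with rfl | hc
      · rw [Function.update_self]
        exact hdis
      · have hcb : c ≠ b := fun h => hb (h ▸ hc)
        rw [Function.update_of_ne hcb]
        exact Disjoint.mono_left (pOm_anti a hJaKa) (hdis₁ c hc)

theorem disjointify [DecidableEq G] (hQL : QuasiLatticeOrdered P) :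
    ∀ F : Finset G, ↑F ⊆ (P : Set G) →
    ∀ K : G → Finset G, (∀ p ∈ F, Jok P (K p)) →
    ∃ K' : G → Finset G, (∀ p ∈ F, Jok P (K' p) ∧ K p ⊆ K' p) ∧
      ∀ p ∈ F, ∀ p' ∈ F, p ≠ p' → Disjoint (pOm P p (K' p)) (pOm P p' (K' p')) := by
  intro F
  induction F using Finset.induction with
  | empty =>
    intro _ K _
    exact ⟨K, fun p hp => absurd hp (by simp), fun p hp => absurd hp (by simp)⟩
  | insert a F ha ih =>
    intro hFP K hK
    have hFP' : ↑F ⊆ (P : Set G) := fun x hx => hFP (Finset.mem_insert_of_mem hx)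
    have haP : a ∈ P := hFP (Finset.mem_insert_self a F)
    obtain ⟨K₁, hK₁, hdis₁⟩ := ih hFP' K (fun p hp => hK p (Finset.mem_insert_of_mem hp))
    obtain ⟨Ja', K₂, hJa', hJsub, hK₂, hdis₂⟩ := sep_many hQL haP F hFP' ha K₁
      (fun p hp => (hK₁ p hp).1) (K a) (hK a (Finset.mem_insert_self a F))
    refine ⟨Function.update K₂ a Ja', ?_, ?_⟩
    · intro p hp
      rcases Finset.mem_insert.1 hp with rfl | hp
      · rw [Function.update_self]
        exact ⟨hJa', hJsub⟩
      · have hpa : p ≠ a := fun h => ha (h ▸ hp)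
        rw [Function.update_of_ne hpa]
        exact ⟨(hK₂ p hp).1, (hK₁ p hp).2.trans (hK₂ p hp).2⟩
    · intro p hp p' hp' hne
      by_cases h1 : p = a
      · subst h1
        have h2 : p' ≠ p := fun h => hne h.symm
        have hp'F : p' ∈ F := by
          rcases Finset.mem_insert.1 hp' with h | h
          · exact absurd h h2
          · exact h
        rw [Function.update_self, Function.update_of_ne h2]
        exact hdis₂ p' hp'F
      · have hpF : p ∈ F := by
          rcases Finset.mem_insert.1 hp with h | h
          · exact absurd h h1
          · exact h
        by_cases h2 : p' = a
        · subst h2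
          rw [Function.update_self, Function.update_of_ne h1]
          exact (hdis₂ p hpF).symm
        · have hp'F : p' ∈ F := by
            rcases Finset.mem_insert.1 hp' with h | h
            · exact absurd h h2
            · exact h
          rw [Function.update_of_ne h1, Function.update_of_ne h2]
          exact Disjoint.mono (pOm_anti p (hK₂ p hpF).2) (pOm_anti p' (hK₂ p' hp'F).2)
            (hdis₁ p hpF p' hp'F hne)

section lb
variable {μ : Set G → ℝ}
variable (hpos : ∀ Ω : Set G, MemBP P Ω → 0 ≤ μ Ω)
variable (hadd : ∀ Ω₁ Ω₂ : Set G, MemBP P Ω₁ → MemBP P Ω₂ → Disjoint Ω₁ Ω₂ →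
      μ (Ω₁ ∪ Ω₂) = μ Ω₁ + μ Ω₂)

include hpos hadd in
theorem lb (hQL : QuasiLatticeOrdered P) {Ω : Set G} (hΩ : MemBP P Ω)
    (F : Finset G) (hFP : ↑F ⊆ (P : Set G)) (hFΩ : ∀ p ∈ F, p ∈ Ω) :
    ∑ p ∈ F, cc P μ p ≤ μ Ω := by
  classical
  have hch : ∀ p : G, ∃ J, Jok P J ∧ (p ∈ F → pOm P p J ⊆ Ω) := by
    intro p
    by_cases hp : p ∈ F
    · obtain ⟨J, hJ, _, h1, _⟩ := approx hQL hΩ (hFP hp) ∅ jok_empty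
      exact ⟨J, hJ, fun _ => h1 (hFΩ p hp)⟩
    · exact ⟨∅, jok_empty, fun h => absurd h hp⟩
  choose K₀ hK₀ using hch
  obtain ⟨K, hK, hdis⟩ := disjointify hQL F hFP K₀ (fun p hp => (hK₀ p).1)
  have hsub : ∀ p ∈ F, pOm P p (K p) ⊆ Ω := fun p hp =>
    (pOm_anti p (hK p hp).2).trans ((hK₀ p).2 hp)
  calc ∑ p ∈ F, cc P μ p ≤ ∑ p ∈ F, μ (pOm P p (K p)) :=
        Finset.sum_le_sum fun p hp => cc_le hpos (hFP hp) (hK p hp).1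
    _ ≤ μ Ω := mu_disjoint_sum_le hpos hadd
        (fun p hp => memBP_pOm (hFP hp) (hK p hp).1) hΩ hsub hdis

variable (hsum : Summable fun p : P => μ {x | QLe P (p : G) x})

/-- indicator shorthand -/
noncomputable def ind (P : Submonoid G) (μ : Set G → ℝ) (Ω : Set G) (p : P) : ℝ :=
  Set.indicator {q : P | (q : G) ∈ Ω} (fun q : P => cc P μ (q : G)) p

include hpos hsum in
theorem summable_cc : Summable (fun p : P => cc P μ (p : G)) :=
  Summable.of_nonneg_of_le (fun p => cc_nonneg hpos p.2)
    (fun p => cc_le_bset hpos p.2) hsum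

include hpos hsum in
theorem summable_ind (Ω : Set G) : Summable (ind P μ Ω) := by
  apply Summable.of_nonneg_of_le _ _ (summable_cc hpos hsum)
  · intro p
    exact Set.indicator_apply_nonneg (fun _ => cc_nonneg hpos p.2)
  · intro p
    exact Set.indicator_apply_le' (fun _ => le_rfl) (fun _ => cc_nonneg hpos p.2)

theorem sum_ind (Ω : Set G) (F' : Finset P) [DecidablePred fun p : P => (p : G) ∈ Ω] :
    ∑ p ∈ F', ind P μ Ω p = ∑ p ∈ F'.filter (fun p : P => (p : G) ∈ Ω), cc P μ (p : G) := by
  rw [Finset.sum_filter]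
  apply Finset.sum_congr rfl
  intro p _
  by_cases h : (p : G) ∈ Ω <;> simp [ind, Set.indicator_apply, h]

include hpos hadd hsum in
theorem lb_tsum (hQL : QuasiLatticeOrdered P) {Ω : Set G} (hΩ : MemBP P Ω) :
    (∑' p : P, ind P μ Ω p) ≤ μ Ω := by
  classical
  apply Summable.tsum_le_of_sum_le (summable_ind hpos hsum Ω)
  intro F'
  rw [sum_ind]
  have himg : ∑ x ∈ (F'.filter fun p : P => (p : G) ∈ Ω).image (fun p : P => (p : G)),
      cc P μ x = ∑ p ∈ F'.filter fun p : P => (p : G) ∈ Ω, cc P μ (p : G) :=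
    Finset.sum_image (fun x _ y _ h => Subtype.coe_injective h)
  rw [← himg]
  apply lb hpos hadd hQL hΩ
  · intro x hx
    simp only [Finset.coe_image, Set.mem_image, Finset.mem_coe] at hx
    obtain ⟨p, _, rfl⟩ := hx
    exact p.2
  · intro x hx
    simp only [Finset.mem_image] at hx
    obtain ⟨p, hp, rfl⟩ := hx
    exact (Finset.mem_filter.1 hp).2

end lb

end QLProof
namespace QLProof

open Finset Set

variable {G : Type*} [Group G] {P : Submonoid G}

theorem exists_sup (hQL : QuasiLatticeOrdered P) :
    ∀ S : Finset G, ∀ x, x ∈ P → (∀ q ∈ S, QLe P q x) →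
    ∃ u, u ∈ P ∧ (∀ q ∈ S, QLe P q u) ∧
      (∀ v, v ∈ P → (∀ q ∈ S, QLe P q v) → QLe P u v) := by
  classical
  intro S
  induction S using Finset.induction with
  | empty =>
    intro x hx _
    exact ⟨1, one_mem P, fun q hq => absurd hq (by simp), fun v hv _ => qle_one.2 hv⟩
  | insert a S ha ih =>
    intro x hx hub
    obtain ⟨u, huP, hu1, hu2⟩ := ih x hx (fun q hq => hub q (Finset.mem_insert_of_mem hq))
    have hux : QLe P u x := hu2 x hx (fun q hq => hub q (Finset.mem_insert_of_mem hq))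
    have hax : QLe P a x := hub a (Finset.mem_insert_self a S)
    obtain ⟨w, hw1, hw2, hw3⟩ := hQL.lub u a ⟨x, hux, hax⟩
    refine ⟨w, qle_mem huP hw1, fun q hq => ?_, fun v hv hq => ?_⟩
    · rcases Finset.mem_insert.1 hq with rfl | hq
      · exact hw2
      · exact qle_trans (hu1 q hq) hw1
    · exact hw3 v (hu2 v hv (fun q hqS => hq q (Finset.mem_insert_of_mem hqS)))
        (hq a (Finset.mem_insert_self a S))

open Classical in
/-- A choice of least upper bound. -/
noncomputable def wlub (P : Submonoid G) (u q : G) : G :=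
  if h : ∃ v, QLub P u q v then h.choose else 1

theorem wlub_spec {u q : G} (h : ∃ v, QLub P u q v) : QLub P u q (wlub P u q) := by
  unfold wlub
  rw [dif_pos h]
  exact h.choose_spec

/-- The `F`-cell of signature `S`. -/
def AS (P : Submonoid G) (F S : Finset G) : Set G :=
  {x | x ∈ P ∧ ∀ q ∈ F, (QLe P q x ↔ q ∈ S)}

theorem AS_disjoint {F S S' : Finset G} (hS : S ⊆ F) (hS' : S' ⊆ F) (hne : S ≠ S') :
    Disjoint (AS P F S) (AS P F S') := by
  classical
  have hq : ∃ q, q ∈ F ∧ ¬(q ∈ S ↔ q ∈ S') := by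
    by_contra hcon
    push_neg at hcon
    apply hne
    ext q
    constructor
    · intro h; exact (hcon q (hS h)).1 h
    · intro h; exact (hcon q (hS' h)).2 h
  obtain ⟨q, hqF, hqd⟩ := hq
  rw [Set.disjoint_left]
  intro x hx hx'
  exact hqd (((hx.2 q hqF).symm).trans (hx'.2 q hqF))

theorem AS_cover {F : Finset G} : (P : Set G) = ⋃ S ∈ F.powerset, AS P F S := by
  classical
  apply Set.eq_of_subset_of_subset
  · intro x hx
    have hmem : x ∈ AS P F (F.filter fun q => QLe P q x) :=
      ⟨hx, fun q hq => by simp [Finset.mem_filter, hq]⟩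
    exact Set.mem_biUnion (Finset.mem_powerset.2 (Finset.filter_subset _ F)) hmem
  · intro x hx
    simp only [Set.mem_iUnion] at hx
    obtain ⟨S, _, hx⟩ := hx
    exact hx.1

theorem memBP_interBset : ∀ S : Finset G, ↑S ⊆ (P : Set G) →
    MemBP P ((P : Set G) ∩ ⋂ q ∈ S, bset P q) := by
  classical
  intro S
  induction S using Finset.induction with
  | empty => intro _; simpa using memBP_P
  | insert a S ha ih =>
    intro hS
    have heq : (P : Set G) ∩ ⋂ q ∈ insert a S, bset P q
        = bset P a ∩ ((P : Set G) ∩ ⋂ q ∈ S, bset P q) := by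
      rw [Finset.set_biInter_insert]
      ext x; simp only [Set.mem_inter_iff]; tauto
    rw [heq]
    exact MemBP.inter _ _ (MemBP.basic a (hS (Finset.mem_insert_self a S)))
      (ih (fun q hq => hS (Finset.mem_insert_of_mem hq)))

theorem memBP_interCompl : ∀ T : Finset G, ↑T ⊆ (P : Set G) → ∀ X : Set G, MemBP P X →
    MemBP P (X ∩ ⋂ q ∈ T, ((P : Set G) \ bset P q)) := by
  classical
  intro T
  induction T using Finset.induction with
  | empty =>
    intro _ X hX
    simpa using hX
  | insert a T ha ih =>
    intro hT X hX
    have heq : X ∩ ⋂ q ∈ insert a T, ((P : Set G) \ bset P q)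
        = ((P : Set G) \ bset P a) ∩ (X ∩ ⋂ q ∈ T, ((P : Set G) \ bset P q)) := by
      rw [Finset.set_biInter_insert]
      ext x; simp only [Set.mem_inter_iff]; tauto
    rw [heq]
    exact MemBP.inter _ _ (MemBP.compl _ (MemBP.basic a (hT (Finset.mem_insert_self a T))))
      (ih (fun q hq => hT (Finset.mem_insert_of_mem hq)) X hX)

theorem AS_eq_inter [DecidableEq G] {F S : Finset G} (hF : ↑F ⊆ (P : Set G)) (hSF : S ⊆ F) :
    AS P F S = ((P : Set G) ∩ ⋂ q ∈ S, bset P q) ∩ ⋂ q ∈ F \ S, ((P : Set G) \ bset P q) := by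
  ext x
  simp only [AS, Set.mem_setOf_eq, Set.mem_inter_iff, Set.mem_iInter, Set.mem_diff,
    Finset.mem_sdiff, bset, Set.mem_setOf_eq]
  constructor
  · rintro ⟨hxP, h⟩
    refine ⟨⟨hxP, fun q hq => (h q (hSF hq)).2 hq⟩, fun q hq => ⟨hxP, fun hle => hq.2 ((h q hq.1).1 hle)⟩⟩
  · rintro ⟨⟨hxP, h1⟩, h2⟩
    refine ⟨hxP, fun q hqF => ⟨fun hle => ?_, fun hqS => h1 q hqS⟩⟩
    by_contra hqS
    exact (h2 q ⟨hqF, hqS⟩).2 hle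

theorem memBP_AS [DecidableEq G] {F S : Finset G} (hF : ↑F ⊆ (P : Set G)) (hSF : S ⊆ F) :
    MemBP P (AS P F S) := by
  rw [AS_eq_inter hF hSF]
  exact memBP_interCompl (F \ S) (fun q hq => hF (Finset.mem_sdiff.1 (Finset.mem_coe.1 hq)).1) _
    (memBP_interBset S (fun q hq => hF (hSF (Finset.mem_coe.1 hq))))

theorem AS_struct [DecidableEq G] (hQL : QuasiLatticeOrdered P) {F S : Finset G}
    (hSF : S ⊆ F) (hne : (AS P F S).Nonempty) :
    ∃ u JS, u ∈ P ∧ (∀ q ∈ S, QLe P q u) ∧ Jok P JS ∧ AS P F S = pOm P u JS := by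
  classical
  obtain ⟨x₀, hx₀⟩ := hne
  have hx₀P : x₀ ∈ P := hx₀.1
  have hubS : ∀ q ∈ S, QLe P q x₀ := fun q hq => (hx₀.2 q (hSF hq)).2 hq
  obtain ⟨u, huP, hub, hleast⟩ := exists_sup hQL S x₀ hx₀P hubS
  have hux₀ : QLe P u x₀ := hleast x₀ hx₀P hubS
  set JS : Finset G :=
    ((F \ S).filter (fun q => ∃ v, QLub P u q v)).image (fun q => u⁻¹ * wlub P u q) with hJS
  have hmemJS : ∀ r ∈ JS, ∃ q ∈ F \ S, (∃ v, QLub P u q v) ∧ r = u⁻¹ * wlub P u q := by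
    intro r hr
    obtain ⟨q, hq, rfl⟩ := Finset.mem_image.1 hr
    obtain ⟨hq1, hq2⟩ := Finset.mem_filter.1 hq
    exact ⟨q, hq1, hq2, rfl⟩
  have hwfacts : ∀ q ∈ F \ S, (∃ v, QLub P u q v) →
      (u⁻¹ * wlub P u q ∈ P ∧ u⁻¹ * wlub P u q ≠ 1 ∧ u * (u⁻¹ * wlub P u q) = wlub P u q) := by
    intro q hq hv
    obtain ⟨hw1, hw2, hw3⟩ := wlub_spec hv
    refine ⟨hw1, ?_, by group⟩
    intro hr1
    have hwu : u = wlub P u q := inv_mul_eq_one.mp hr1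
    have hqu : QLe P q u := by rw [← hwu] at hw2; exact hw2
    have hqx₀ : QLe P q x₀ := qle_trans hqu hux₀
    have : q ∈ S := (hx₀.2 q (Finset.mem_sdiff.1 hq).1).1 hqx₀
    exact (Finset.mem_sdiff.1 hq).2 this
  have hJok : Jok P JS := by
    intro r hr
    obtain ⟨q, hq, hv, rfl⟩ := hmemJS r hr
    exact ⟨(hwfacts q hq hv).1, (hwfacts q hq hv).2.1⟩
  refine ⟨u, JS, huP, hub, hJok, ?_⟩
  ext x
  constructor
  · intro hx
    rw [mem_pOm]
    refine ⟨hleast x hx.1 (fun q hq => (hx.2 q (hSF hq)).2 hq), ?_⟩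
    intro r hr hle
    obtain ⟨q, hq, hv, rfl⟩ := hmemJS r hr
    rw [(hwfacts q hq hv).2.2] at hle
    have hw2 : QLe P q (wlub P u q) := (wlub_spec hv).2.1
    have : q ∈ S := (hx.2 q (Finset.mem_sdiff.1 hq).1).1 (qle_trans hw2 hle)
    exact (Finset.mem_sdiff.1 hq).2 this
  · intro hx
    rw [mem_pOm] at hx
    obtain ⟨hx1, hx2⟩ := hx
    have hxP : x ∈ P := qle_mem huP hx1
    refine ⟨hxP, fun q hqF => ⟨fun hle => ?_, fun hqS => qle_trans (hub q hqS) hx1⟩⟩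
    by_contra hqS
    have hqFS : q ∈ F \ S := Finset.mem_sdiff.2 ⟨hqF, hqS⟩
    have hv : ∃ v, QLub P u q v := hQL.lub u q ⟨x, hx1, hle⟩
    have hrJS : u⁻¹ * wlub P u q ∈ JS := by
      rw [hJS]
      exact Finset.mem_image.2 ⟨q, Finset.mem_filter.2 ⟨hqFS, hv⟩, rfl⟩
    have hwx : QLe P (wlub P u q) x := (wlub_spec hv).2.2 x hx1 hle
    exact hx2 _ hrJS (by rwa [(hwfacts q hqFS hv).2.2])

end QLProof
namespace QLProof

open Finset Set

variable {G : Type*} [Group G] {P : Submonoid G}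

section hard
variable {μ : Set G → ℝ}
variable (hpos : ∀ Ω : Set G, MemBP P Ω → 0 ≤ μ Ω)
variable (hadd : ∀ Ω₁ Ω₂ : Set G, MemBP P Ω₁ → MemBP P Ω₂ → Disjoint Ω₁ Ω₂ →
      μ (Ω₁ ∪ Ω₂) = μ Ω₁ + μ Ω₂)

theorem sum_lift (f : G → ℝ) (A : Finset G) (hA : ↑A ⊆ (P : Set G)) :
    ∃ t : Finset P, (∀ p ∈ t, (p : G) ∈ A) ∧ ∑ p ∈ t, f (p : G) = ∑ a ∈ A, f a := by
  classical
  refine ⟨A.attach.image (fun a => (⟨a.1, hA a.2⟩ : P)), ?_, ?_⟩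
  · intro p hp
    obtain ⟨a, _, rfl⟩ := Finset.mem_image.1 hp
    exact a.2
  · rw [Finset.sum_image (fun x _ y _ h => by have h' := congrArg Subtype.val h; exact Subtype.ext h')]
    exact Finset.sum_attach A (fun a => f a)

include hpos in
theorem finsum_cc_le_tsum (hsum : Summable fun p : P => μ {x | QLe P (p : G) x})
    (A : Finset G) (hA : ↑A ⊆ (P : Set G)) :
    ∑ p ∈ A, cc P μ p ≤ ∑' p : P, cc P μ (p : G) := by
  obtain ⟨t, _, ht⟩ := sum_lift (cc P μ) A hA
  rw [← ht]
  exact Summable.sum_le_tsum t (fun p _ => cc_nonneg hpos p.2) (summable_cc hpos hsum)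

open Classical in
include hpos hadd in
theorem per_S [DecidableEq G] (hQL : QuasiLatticeOrdered P) {F : Finset G}
    (hF : ↑F ⊆ (P : Set G)) {ε2 : ℝ} (hε2 : 0 < ε2) (S : Finset G) :
    ∃ (u : G) (T : Finset G),
      (S ⊆ F → (∀ r ∈ T, r ∈ P ∧ r ∉ F) ∧
      ((AS P F S).Nonempty → u ∈ P ∧ (∀ x ∈ AS P F S, QLe P u x) ∧ (∀ q ∈ S, QLe P q u)) ∧
      μ (AS P F S) ≤ (if (AS P F S).Nonempty then cc P μ u else 0) + ε2
        + ∑ r ∈ T, μ (AS P F S ∩ bset P r)) := by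
  by_cases hSF' : S ⊆ F
  swap
  · exact ⟨1, ∅, fun h => absurd h hSF'⟩
  by_cases hne : (AS P F S).Nonempty
  swap
  · refine ⟨1, ∅, fun _ => ⟨by simp, fun h => absurd h hne, ?_⟩⟩
    rw [Set.not_nonempty_iff_eq_empty] at hne
    rw [hne, mu_empty hadd, if_neg (by simp)]
    simp
    positivity
  obtain ⟨u, JS, huP, hub, hJok, hASeq⟩ := AS_struct hQL hSF' hne
  obtain ⟨J', hJ', hJSJ', hlt⟩ := cc_lt hpos hadd huP hε2 hJok
  set T : Finset G := ((J' \ JS).image (fun q => u * q)).filter (fun r => r ∉ F) with hT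
  have hTmem : ∀ r ∈ T, ∃ q ∈ J' \ JS, r = u * q ∧ r ∉ F := by
    intro r hr
    obtain ⟨hr1, hr2⟩ := Finset.mem_filter.1 hr
    obtain ⟨q, hq, rfl⟩ := Finset.mem_image.1 hr1
    exact ⟨q, hq, rfl, hr2⟩
  have hTP : ∀ r ∈ T, r ∈ P ∧ r ∉ F := by
    intro r hr
    obtain ⟨q, hq, rfl, hrF⟩ := hTmem r hr
    exact ⟨mul_mem huP (hJ' q (Finset.mem_sdiff.1 hq).1).1, hrF⟩
  refine ⟨u, T, fun _ => ⟨hTP, fun _ => ⟨huP, fun x hx => (mem_pOm.1 (hASeq ▸ hx)).1, hub⟩, ?_⟩⟩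
  rw [if_pos hne]
  -- μ (AS) = μ (pOm u J') + μ (pOm u JS \ pOm u J')
  have hJ'sub : pOm P u J' ⊆ pOm P u JS := pOm_anti u hJSJ'
  have hmemJS : MemBP P (pOm P u JS) := memBP_pOm huP hJok
  have hmemJ' : MemBP P (pOm P u J') := memBP_pOm huP hJ'
  have hdiff := mu_diff hpos hadd hmemJ' hmemJS hJ'sub
  -- bound the difference by the union of intersections
  have hsubU : pOm P u JS \ pOm P u J' ⊆ ⋃ q ∈ J' \ JS, (pOm P u JS ∩ bset P (u * q)) :=
    pOm_diff_subset u hJSJ'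
  have hmemInter : ∀ q ∈ J' \ JS, MemBP P (pOm P u JS ∩ bset P (u * q)) := by
    intro q hq
    exact MemBP.inter _ _ hmemJS (MemBP.basic _ (mul_mem huP (hJ' q (Finset.mem_sdiff.1 hq).1).1))
  have hboundDiff : μ (pOm P u JS \ pOm P u J')
      ≤ ∑ q ∈ J' \ JS, μ (pOm P u JS ∩ bset P (u * q)) := by
    calc μ (pOm P u JS \ pOm P u J')
        ≤ μ (⋃ q ∈ J' \ JS, (pOm P u JS ∩ bset P (u * q))) :=
          mu_mono hpos hadd (memBP_diff hmemJS hmemJ') (memBP_biUnion hmemInter) hsubU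
      _ ≤ ∑ q ∈ J' \ JS, μ (pOm P u JS ∩ bset P (u * q)) := mu_biUnion_le hpos hadd hmemInter
  -- rewrite the sum over the image
  have himg : ∑ q ∈ J' \ JS, μ (pOm P u JS ∩ bset P (u * q))
      = ∑ r ∈ (J' \ JS).image (fun q => u * q), μ (pOm P u JS ∩ bset P r) := by
    rw [Finset.sum_image (fun x _ y _ h => mul_left_cancel h)]
  -- terms with r ∈ F vanish
  have hzero : ∀ r ∈ (J' \ JS).image (fun q => u * q), r ∉ T → μ (pOm P u JS ∩ bset P r) = 0 := by
    intro r hr hrT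
    have hrF : r ∈ F := by
      by_contra hrF
      exact hrT (Finset.mem_filter.2 ⟨hr, hrF⟩)
    obtain ⟨q, hq, rfl⟩ := Finset.mem_image.1 hr
    have hq1 : q ∈ P := (hJ' q (Finset.mem_sdiff.1 hq).1).1
    have hqne : q ≠ 1 := (hJ' q (Finset.mem_sdiff.1 hq).1).2
    have hrS : u * q ∉ S := by
      intro hrS
      have hle : QLe P (u * q) u := hub _ hrS
      have hqinv : q⁻¹ ∈ P := by
        have heq : (u * q)⁻¹ * u = q⁻¹ := by group
        have h2 : (u * q)⁻¹ * u ∈ P := hle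
        rwa [heq] at h2
      exact hqne (hQL.cap q hq1 hqinv)
    have hempty : pOm P u JS ∩ bset P (u * q) = ∅ := by
      rw [← hASeq]
      ext x
      simp only [Set.mem_inter_iff, Set.mem_empty_iff_false, iff_false, not_and]
      intro hx hbx
      exact hrS ((hx.2 (u * q) hrF).1 hbx)
    rw [hempty, mu_empty hadd]
  have hsumT : ∑ r ∈ (J' \ JS).image (fun q => u * q), μ (pOm P u JS ∩ bset P r)
      = ∑ r ∈ T, μ (pOm P u JS ∩ bset P r) :=
    (Finset.sum_subset (Finset.filter_subset _ _) hzero).symm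
  have : μ (AS P F S) = μ (pOm P u JS) := by rw [hASeq]
  rw [this]
  have hAS_T : ∀ r ∈ T, μ (pOm P u JS ∩ bset P r) = μ (AS P F S ∩ bset P r) := by
    intro r _
    rw [hASeq]
  calc μ (pOm P u JS)
      = μ (pOm P u J') + μ (pOm P u JS \ pOm P u J') := by rw [hdiff]; ring
    _ ≤ (cc P μ u + ε2) + ∑ r ∈ T, μ (pOm P u JS ∩ bset P r) := by
        rw [himg, hsumT] at hboundDiff
        exact add_le_add (le_of_lt hlt) hboundDiff
    _ = cc P μ u + ε2 + ∑ r ∈ T, μ (AS P F S ∩ bset P r) := by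
        rw [Finset.sum_congr rfl hAS_T]

end hard

end QLProof
namespace QLProof

open Finset Set Filter

variable {G : Type*} [Group G] {P : Submonoid G}

section main
variable {μ : Set G → ℝ}
variable (hpos : ∀ Ω : Set G, MemBP P Ω → 0 ≤ μ Ω)
variable (hadd : ∀ Ω₁ Ω₂ : Set G, MemBP P Ω₁ → MemBP P Ω₂ → Disjoint Ω₁ Ω₂ →
      μ (Ω₁ ∪ Ω₂) = μ Ω₁ + μ Ω₂)

include hpos hadd in
theorem one_le_tsum_cc (hQL : QuasiLatticeOrdered P) (hone : μ (P : Set G) = 1)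
    (hsum : Summable fun p : P => μ {x | QLe P (p : G) x}) :
    1 ≤ ∑' p : P, cc P μ (p : G) := by
  classical
  apply le_of_forall_pos_le_add
  intro ε hε
  have hε' : 0 < ε / 2 := by linarith
  obtain ⟨s, hs⟩ := hsum.vanishing (Iio_mem_nhds hε')
  set F : Finset G := insert 1 (s.image (fun p : P => (p : G))) with hFdef
  have hFP : ↑F ⊆ (P : Set G) := by
    intro x hx
    simp only [hFdef, Finset.coe_insert, Set.mem_insert_iff, Finset.coe_image,
      Set.mem_image, Finset.mem_coe] at hx
    rcases hx with rfl | ⟨p, _, rfl⟩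
    · exact one_mem P
    · exact p.2
  set N := F.powerset.card with hNdef
  have hN : 0 < N := Finset.card_pos.2 ⟨∅, Finset.mem_powerset.2 (Finset.empty_subset F)⟩
  have hNR : (0:ℝ) < N := by exact_mod_cast hN
  set ε2 := ε / 2 / N with hε2def
  have hε2 : 0 < ε2 := div_pos hε' hNR
  choose uu TT hper using per_S hpos hadd hQL hFP hε2
  -- the partition identity
  have hcover : (1:ℝ) = ∑ S ∈ F.powerset, μ (AS P F S) := by
    rw [← hone]
    have hc : (P : Set G) = ⋃ S ∈ F.powerset, AS P F S := AS_cover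
    rw [hc]
    exact mu_biUnion hpos hadd
      (fun S hS => memBP_AS hFP (Finset.mem_powerset.1 hS))
      (fun S hS S' hS' hne =>
        AS_disjoint (Finset.mem_powerset.1 hS) (Finset.mem_powerset.1 hS') hne)
  have hmain : ∑ S ∈ F.powerset, μ (AS P F S)
      ≤ (∑ S ∈ F.powerset, (if (AS P F S).Nonempty then cc P μ (uu S) else 0))
        + (∑ _S ∈ F.powerset, ε2)
        + ∑ S ∈ F.powerset, ∑ r ∈ TT S, μ (AS P F S ∩ bset P r) := by
    rw [← Finset.sum_add_distrib, ← Finset.sum_add_distrib]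
    exact Finset.sum_le_sum fun S hS => (hper S (Finset.mem_powerset.1 hS)).2.2
  -- Bound A
  have hA : (∑ S ∈ F.powerset, (if (AS P F S).Nonempty then cc P μ (uu S) else 0))
      ≤ ∑' p : P, cc P μ (p : G) := by
    rw [← Finset.sum_filter]
    set S' := F.powerset.filter (fun S => (AS P F S).Nonempty) with hS'def
    have hprops : ∀ S ∈ S', uu S ∈ P ∧ (∀ x ∈ AS P F S, QLe P (uu S) x) ∧
        (∀ q ∈ S, QLe P q (uu S)) := by
      intro S hS
      obtain ⟨hS1, hS2⟩ := Finset.mem_filter.1 hS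
      exact (hper S (Finset.mem_powerset.1 hS1)).2.1 hS2
    have hdir : ∀ S ∈ S', ∀ T ∈ S', uu S = uu T → ∀ q ∈ S, q ∈ T := by
      intro S hS T hT hequ q hq
      obtain ⟨x, hx⟩ := (Finset.mem_filter.1 hT).2
      have h1 : QLe P q (uu S) := (hprops S hS).2.2 q hq
      have h2 : QLe P (uu T) x := (hprops T hT).2.1 x hx
      have h3 : QLe P q x := qle_trans (hequ ▸ h1) h2
      exact (hx.2 q (Finset.mem_powerset.1 (Finset.mem_filter.1 hS).1 hq)).1 h3
    have hinj : ∀ S ∈ S', ∀ T ∈ S', uu S = uu T → S = T := by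
      intro S hS T hT hequ
      ext q
      exact ⟨fun h => hdir S hS T hT hequ q h, fun h => hdir T hT S hS hequ.symm q h⟩
    have himg : ∑ x ∈ S'.image uu, cc P μ x = ∑ S ∈ S', cc P μ (uu S) :=
      Finset.sum_image hinj
    rw [← himg]
    apply finsum_cc_le_tsum hpos hsum
    intro x hx
    simp only [Finset.coe_image, Set.mem_image, Finset.mem_coe] at hx
    obtain ⟨S, hS, rfl⟩ := hx
    exact (hprops S hS).1
  -- Bound B
  have hB : (∑ _S ∈ F.powerset, ε2) = ε / 2 := by
    rw [Finset.sum_const, nsmul_eq_mul, ← hNdef, hε2def]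
    field_simp
  -- Bound C
  set R := F.powerset.biUnion TT with hRdef
  have hRP : ∀ r ∈ R, r ∈ P ∧ r ∉ F := by
    intro r hr
    obtain ⟨S, hS, hrT⟩ := Finset.mem_biUnion.1 hr
    exact (hper S (Finset.mem_powerset.1 hS)).1 r hrT
  have hC1 : ∀ S ∈ F.powerset, ∑ r ∈ TT S, μ (AS P F S ∩ bset P r)
      ≤ ∑ r ∈ R, μ (AS P F S ∩ bset P r) := by
    intro S hS
    apply Finset.sum_le_sum_of_subset_of_nonneg (Finset.subset_biUnion_of_mem TT hS)
    intro r hr _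
    exact hpos _ (MemBP.inter _ _ (memBP_AS hFP (Finset.mem_powerset.1 hS))
      (MemBP.basic r (hRP r hr).1))
  have hC3 : ∀ r ∈ R, ∑ S ∈ F.powerset, μ (AS P F S ∩ bset P r) ≤ μ (bset P r) := by
    intro r hr
    apply mu_disjoint_sum_le hpos hadd
    · intro S hS
      exact MemBP.inter _ _ (memBP_AS hFP (Finset.mem_powerset.1 hS))
        (MemBP.basic r (hRP r hr).1)
    · exact MemBP.basic r (hRP r hr).1
    · intro S _
      exact Set.inter_subset_right
    · intro S hS S'' hS'' hne
      exact ((AS_disjoint (Finset.mem_powerset.1 hS) (Finset.mem_powerset.1 hS'') hne)).mono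
        Set.inter_subset_left Set.inter_subset_left
  have hC4 : ∑ r ∈ R, μ (bset P r) < ε / 2 := by
    obtain ⟨t, htA, ht⟩ := sum_lift (fun r => μ (bset P r)) R (fun r hr => (hRP r hr).1)
    rw [← ht]
    have hdisj : Disjoint t s := by
      rw [Finset.disjoint_left]
      intro p hp hps
      have hrR : (p : G) ∈ R := htA p hp
      apply (hRP _ hrR).2
      rw [hFdef]
      exact Finset.mem_insert_of_mem (Finset.mem_image.2 ⟨p, hps, rfl⟩)
    exact hs t hdisj
  have hC : ∑ S ∈ F.powerset, ∑ r ∈ TT S, μ (AS P F S ∩ bset P r) < ε / 2 := by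
    calc ∑ S ∈ F.powerset, ∑ r ∈ TT S, μ (AS P F S ∩ bset P r)
        ≤ ∑ S ∈ F.powerset, ∑ r ∈ R, μ (AS P F S ∩ bset P r) := Finset.sum_le_sum hC1
      _ = ∑ r ∈ R, ∑ S ∈ F.powerset, μ (AS P F S ∩ bset P r) := Finset.sum_comm
      _ ≤ ∑ r ∈ R, μ (bset P r) := Finset.sum_le_sum hC3
      _ < ε / 2 := hC4
  calc (1:ℝ) = ∑ S ∈ F.powerset, μ (AS P F S) := hcover
    _ ≤ _ := hmain
    _ ≤ (∑' p : P, cc P μ (p : G)) + ε / 2 + ε / 2 := by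
        apply add_le_add (add_le_add hA (le_of_eq hB)) (le_of_lt hC)
    _ = (∑' p : P, cc P μ (p : G)) + ε := by ring

end main

end QLProof

/-- If `μ` is a finitely additive probability measure on `(P, B_P)` with `(μ(pP))_{p ∈ P}`
summable, then `μ` extends to a countably additive probability measure defined on all
subsets of `P` (the σ-algebra `⊤` on the subtype `P`). -/
theorem stmt9 {G : Type*} [Group G] (P : Submonoid G) (hQL : QuasiLatticeOrdered P)
    (μ : Set G → ℝ)
    (hpos : ∀ Ω : Set G, MemBP P Ω → 0 ≤ μ Ω)
    (hone : μ (P : Set G) = 1)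
    (hadd : ∀ Ω₁ Ω₂ : Set G, MemBP P Ω₁ → MemBP P Ω₂ → Disjoint Ω₁ Ω₂ →
      μ (Ω₁ ∪ Ω₂) = μ Ω₁ + μ Ω₂)
    (hsum : Summable fun p : P => μ {x | QLe P (p : G) x}) :
    ∃ ν : @MeasureTheory.Measure {x : G // x ∈ P} ⊤,
      @MeasureTheory.IsProbabilityMeasure _ ⊤ ν ∧
      ∀ Ω : Set G, MemBP P Ω →
        ν {x : {x : G // x ∈ P} | (x : G) ∈ Ω} = ENNReal.ofReal (μ Ω) := by
  classical
  open QLProof MeasureTheory Set in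
  · letI : MeasurableSpace {x : G // x ∈ P} := ⊤
    -- total mass of the atom weights
    have hsumcc : Summable (fun p : P => cc P μ (p : G)) := summable_cc hpos hsum
    have hindP : ∀ p : P, ind P μ (P : Set G) p = cc P μ (p : G) := fun p =>
      Set.indicator_of_mem (show p ∈ {q : P | (q : G) ∈ (P : Set G)} from p.2)
        (fun q : P => cc P μ (q : G))
    have htot : ∑' p : P, cc P μ (p : G) = 1 := by
      apply le_antisymm
      · have h1 := lb_tsum hpos hadd hsum hQL (memBP_P (P := P))
        rw [hone] at h1
        exact le_trans (le_of_eq (tsum_congr fun p => (hindP p).symm)) h1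
      · exact one_le_tsum_cc hpos hadd hQL hone hsum
    -- the measure of each Ω ∈ B_P is the sum of its atom weights
    have hkey : ∀ Ω : Set G, MemBP P Ω → (∑' p : P, ind P μ Ω p) = μ Ω := by
      intro Ω hΩ
      apply le_antisymm (lb_tsum hpos hadd hsum hQL hΩ)
      have hdiffBP : MemBP P ((P : Set G) \ Ω) := MemBP.compl _ hΩ
      have hlbdiff := lb_tsum hpos hadd hsum hQL hdiffBP
      have hsplit : ∀ p : P, ind P μ Ω p + ind P μ ((P : Set G) \ Ω) p = cc P μ (p : G) := by
        intro p
        by_cases h : (p : G) ∈ Ω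
        · unfold ind
          rw [Set.indicator_of_mem (show p ∈ {q : P | (q : G) ∈ Ω} from h),
            Set.indicator_of_notMem (show p ∉ {q : P | (q : G) ∈ (P : Set G) \ Ω} from
              fun hc => hc.2 h), add_zero]
        · unfold ind
          rw [Set.indicator_of_notMem (show p ∉ {q : P | (q : G) ∈ Ω} from h),
            Set.indicator_of_mem (show p ∈ {q : P | (q : G) ∈ (P : Set G) \ Ω} from ⟨p.2, h⟩),
            zero_add]
      have hadd2 : (∑' p : P, ind P μ Ω p) + (∑' p : P, ind P μ ((P : Set G) \ Ω) p) = 1 := by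
        rw [← Summable.tsum_add (summable_ind hpos hsum Ω) (summable_ind hpos hsum _), ← htot]
        exact tsum_congr hsplit
      have hμsplit : μ Ω + μ ((P : Set G) \ Ω) = 1 := by
        have hu : Ω ∪ (P : Set G) \ Ω = (P : Set G) := Set.union_diff_cancel (memBP_subset hΩ)
        have := hadd Ω ((P : Set G) \ Ω) hΩ hdiffBP disjoint_sdiff_right
        rw [hu, hone] at this
        linarith
      linarith
    -- define the measure
    set ν : @MeasureTheory.Measure {x : G // x ∈ P} ⊤ :=
      MeasureTheory.Measure.sum
        (fun p : P => ENNReal.ofReal (cc P μ (p : G)) • MeasureTheory.Measure.dirac p) with hν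
    have hνapp : ∀ s : Set {x : G // x ∈ P},
        ν s = ∑' p : P, ENNReal.ofReal (cc P μ (p : G)) * s.indicator 1 p := by
      intro s
      rw [hν, MeasureTheory.Measure.sum_apply _ MeasurableSpace.measurableSet_top]
      refine tsum_congr fun p => ?_
      rw [MeasureTheory.Measure.smul_apply, smul_eq_mul,
        MeasureTheory.Measure.dirac_apply' _ MeasurableSpace.measurableSet_top]
    have hform : ∀ Ω : Set G,
        ν {x : {x : G // x ∈ P} | (x : G) ∈ Ω} = ENNReal.ofReal (∑' p : P, ind P μ Ω p) := by
      intro Ω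
      have hofr := ENNReal.ofReal_tsum_of_nonneg (f := fun p : P => ind P μ Ω p)
        (fun p => Set.indicator_apply_nonneg (fun _ => cc_nonneg hpos p.2))
        (summable_ind hpos hsum Ω)
      rw [hνapp, hofr]
      refine tsum_congr fun p => ?_
      by_cases h : (p : G) ∈ Ω <;> simp [ind, Set.indicator_apply, h]
    refine ⟨ν, ?_, ?_⟩
    · constructor
      have huniv : (Set.univ : Set {x : G // x ∈ P})
          = {x : {x : G // x ∈ P} | (x : G) ∈ (P : Set G)} := by
        ext x; simp [x.2]
      rw [huniv, hform]
      have h2 : (∑' p : P, ind P μ (P : Set G) p) = 1 := by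
        rw [← htot]
        exact tsum_congr hindP
      rw [h2, ENNReal.ofReal_one]
    · intro Ω hΩ
      rw [hform, hkey Ω hΩ]
end
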